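/- arXiv:1608.04525 — 3 statements merged into one kernel-verified Lean document; each statement's English description precedes it below -/
import Mathlib

section
/- Let A be a commutative ring in which every regular element (non-zerodivisor) is a unit. Then any injective A-module homomorphism between two finite free A-modules of the same finite rank is surjective, hence an isomorphism. -/
open Matrix

lemma mccoy_det_regular {A : Type*} [CommRing A] {n : ℕ}
    {M : Matrix (Fin n) (Fin n) A}
    (hM : ∀ v : Fin n → A, M *ᵥ v = 0 → v = 0) :
    M.det ∈ nonZeroDivisors A := by
  classical
  rw [mem_nonZeroDivisors_iff_right]
  intro a ha
  by_contra a0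
  set P : ℕ → Prop := fun k => ∃ r c : Fin k → Fin n, a * (M.submatrix r c).det ≠ 0 with hPdef
  have hP0 : P 0 := ⟨Fin.elim0, Fin.elim0, by simpa [Matrix.det_fin_zero] using a0⟩
  have hPn : ¬ P n := by
    rintro ⟨r, c, hrc⟩
    apply hrc
    by_cases hr : Function.Injective r
    · by_cases hc : Function.Injective c
      · have hrb : Function.Bijective r := (Finite.injective_iff_bijective).mp hr
        have hcb : Function.Bijective c := (Finite.injective_iff_bijective).mp hc
        set e₁ : Fin n ≃ Fin n := Equiv.ofBijective r hrb with he₁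
        set e₂ : Fin n ≃ Fin n := Equiv.ofBijective c hcb with he₂
        set σ : Equiv.Perm (Fin n) := e₂.trans e₁.symm with hσ
        have hsub : M.submatrix r c = (M.submatrix e₁ e₁).submatrix id σ := by
          ext i j
          simp [he₁, he₂, hσ, Matrix.submatrix_apply, Equiv.ofBijective_apply,
            Equiv.apply_symm_apply, Equiv.ofBijective_apply_symm_apply]
        rw [hsub, det_permute', det_submatrix_equiv_self]
        calc a * (↑(Equiv.Perm.sign σ) * M.det) = ↑(Equiv.Perm.sign σ) * (a * M.det) := by ring
          _ = 0 := by rw [ha, mul_zero]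
      · simp only [Function.Injective, not_forall] at hc
        obtain ⟨i, j, hij, hne⟩ := hc
        rw [det_zero_of_column_eq hne (fun l => by simp [Matrix.submatrix_apply, hij]), mul_zero]
    · simp only [Function.Injective, not_forall] at hr
      obtain ⟨i, j, hij, hne⟩ := hr
      rw [det_zero_of_row_eq hne (by funext l; simp [Matrix.submatrix_apply, hij]), mul_zero]
  set k : ℕ := Nat.findGreatest P n with hkdef
  have hk : P k := Nat.findGreatest_spec (Nat.zero_le n) hP0
  have hkn : k ≤ n := Nat.findGreatest_le n
  have hklt : k < n := lt_of_le_of_ne hkn (fun h => hPn (h ▸ hk))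
  have hsucc : ∀ r c : Fin (k+1) → Fin n, a * (M.submatrix r c).det = 0 := by
    intro r c
    by_contra h
    exact Nat.findGreatest_is_greatest (Nat.lt_succ_self k) hklt ⟨r, c, h⟩
  obtain ⟨r, c, hrc⟩ := hk
  have hcinj : Function.Injective c := by
    intro i j hij
    by_contra hne
    exact hrc (by
      rw [det_zero_of_column_eq hne (fun l => by simp [Matrix.submatrix_apply, hij]), mul_zero])
  have hcns : ¬ Function.Surjective c := by
    intro h
    have := Fintype.card_le_of_surjective c h
    simp only [Fintype.card_fin] at this
    omega
  obtain ⟨j₀, hj₀⟩ := not_forall.mp hcns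
  have hj₀' : ∀ l, c l ≠ j₀ := by push_neg at hj₀; exact hj₀
  set c' : Fin (k+1) → Fin n := Fin.cons j₀ c with hc'
  set w : Fin (k+1) → A := fun l => (-1:A)^(l:ℕ) * a * (M.submatrix r (c' ∘ l.succAbove)).det
    with hw
  set v : Fin n → A := fun j => ∑ l, if j = c' l then w l else 0 with hv
  have hMv : M *ᵥ v = 0 := by
    funext i
    have L : (M *ᵥ v) i = ∑ l, M i (c' l) * w l := by
      simp only [Matrix.mulVec, dotProduct, hv, Finset.mul_sum]
      rw [Finset.sum_comm]
      refine Finset.sum_congr rfl fun l _ => ?_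
      simp [mul_ite, Finset.sum_ite_eq']
    have R : a * (M.submatrix (Fin.cons i r) c').det = ∑ l, M i (c' l) * w l := by
      rw [det_succ_row_zero, Finset.mul_sum]
      refine Finset.sum_congr rfl fun l _ => ?_
      have h1 : ((M.submatrix (Fin.cons i r) c').submatrix Fin.succ l.succAbove)
          = M.submatrix r (c' ∘ l.succAbove) := by
        ext p q
        simp [Matrix.submatrix_apply, Fin.cons_succ]
      rw [h1]
      simp only [Matrix.submatrix_apply, Fin.cons_zero, hw]
      ring
    rw [Pi.zero_apply, L, ← R]
    exact hsucc _ _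
  have hc'succ : ∀ m : Fin k, c' m.succ = c m := fun m => by simp [hc']
  have hvj₀ : v j₀ = w 0 := by
    have hv0 : v j₀ = ∑ l, if j₀ = c' l then w l else 0 := rfl
    rw [hv0, Finset.sum_eq_single (0 : Fin (k+1))]
    · simp [hc']
    · intro l _ hl
      obtain ⟨m, rfl⟩ := Fin.eq_succ_of_ne_zero hl
      rw [if_neg]
      rw [hc'succ m]
      exact fun h => hj₀' m h.symm
    · intro h; exact absurd (Finset.mem_univ _) h
  have hvne : v j₀ ≠ 0 := by
    rw [hvj₀, hw]
    have hcc : c' ∘ Fin.succAbove 0 = c := by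
      funext m
      simp [Fin.succAbove_zero, hc'succ]
    simp only [Fin.succAbove_zero] at hcc
    simpa [hcc] using hrc
  exact hvne (by rw [hM v hMv]; rfl)


/-- Let `A` be a commutative ring in which every regular element
(non-zerodivisor) is a unit.  Then any injective `A`-linear map between two finite free
`A`-modules of the same finite rank is surjective (hence an isomorphism). -/
theorem stmt_5 (A : Type*) [CommRing A]
    (hA : ∀ a ∈ nonZeroDivisors A, IsUnit a)
    (M N : Type*) [AddCommGroup M] [Module A M] [AddCommGroup N] [Module A N]
    (n : ℕ) (bM : Module.Basis (Fin n) A M) (bN : Module.Basis (Fin n) A N)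
    (f : M →ₗ[A] N) (hf : Function.Injective f) :
    Function.Surjective f := by
  classical
  set P : Matrix (Fin n) (Fin n) A := LinearMap.toMatrix bM bN f with hP
  have htl : Matrix.toLin bM bN P = f := Matrix.toLin_toMatrix bM bN f
  have hinj : ∀ v : Fin n → A, P *ᵥ v = 0 → v = 0 := by
    intro v hv
    have h1 : f (bM.equivFun.symm v) = 0 := by
      rw [← htl, Matrix.toLin_apply]
      have : ∀ j, (P *ᵥ (bM.repr (bM.equivFun.symm v))) j = 0 := by
        have hrepr : ∀ j, bM.repr (bM.equivFun.symm v) j = v j := fun j => by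
          rw [← Module.Basis.equivFun_apply, LinearEquiv.apply_symm_apply]
        intro j
        rw [show ((bM.repr (bM.equivFun.symm v)) : Fin n → A) = v from funext hrepr, hv]
        rfl
      rw [Finset.sum_eq_zero (fun j _ => by rw [this j, zero_smul])]
    have h2 : bM.equivFun.symm v = 0 := hf (by rw [h1, map_zero])
    have := congrArg bM.equivFun h2
    rwa [LinearEquiv.apply_symm_apply, map_zero] at this
  have hdet : IsUnit P.det := hA _ (mccoy_det_regular hinj)
  have hPu : IsUnit P := (Matrix.isUnit_iff_isUnit_det P).mpr hdet
  obtain ⟨Q, hQ⟩ : ∃ Q, P * Q = 1 := ⟨P⁻¹, Matrix.mul_nonsing_inv P hdet⟩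
  intro y
  refine ⟨Matrix.toLin bN bM Q y, ?_⟩
  calc f (Matrix.toLin bN bM Q y) = Matrix.toLin bM bN P (Matrix.toLin bN bM Q y) := by
        rw [htl]
    _ = Matrix.toLin bN bN (P * Q) y := (Matrix.toLin_mul_apply bN bM bN P Q y).symm
    _ = y := by rw [hQ, Matrix.toLin_one, LinearMap.id_apply]
end

section
/- Let A be a Noetherian commutative ring and M a finite A-module with an injection M ↪ Q(A)^r into the r-th power of the total ring of fractions. If M_p is a free A_p-module of rank at least r for every associated prime p of A, then the induced map M ⊗_A Q(A) → Q(A)^r is an isomorphism. -/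
open TensorProduct

section AssFin

variable {R : Type*} [CommRing R] {M : Type*} [AddCommGroup M] [Module R M]

theorem my_assPrime_subset_union (N : Submodule R M) :
    associatedPrimes R M ⊆ associatedPrimes R N ∪ associatedPrimes R (M ⧸ N) := by
  exact associatedPrimes.subset_union_of_exact N.injective_subtype (LinearMap.exact_subtype_mkQ N)

theorem my_associatedPrimes_finite [IsNoetherianRing R] [IsNoetherian R M] :
    ∃ s : Finset (Ideal R), associatedPrimes R M ⊆ ↑s := by
  have key : ∀ N : Submodule R M, ∃ s : Finset (Ideal R), associatedPrimes R (M ⧸ N) ⊆ ↑s := by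
    intro N
    classical
    induction N using IsNoetherian.induction with
    | _ N IH =>
      by_cases hN : N = ⊤
      · subst hN
        haveI : Subsingleton (M ⧸ (⊤ : Submodule R M)) :=
          Submodule.Quotient.subsingleton_iff.mpr rfl
        exact ⟨∅, by rw [associatedPrimes.eq_empty_of_subsingleton]; simp⟩
      · haveI : Nontrivial (M ⧸ N) := Submodule.Quotient.nontrivial_iff.mpr hN
        obtain ⟨p, hpA⟩ := associatedPrimes.nonempty R (M ⧸ N)
        obtain ⟨hp1, y, hy⟩ := isAssociatedPrime_iff.mp hpA
        rw [Submodule.bot_colon'] at hy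
        have hy0 : y ≠ 0 := by
          rintro rfl
          exact hp1.ne_top (by rw [hy, Submodule.span_zero_singleton, Submodule.annihilator_bot])
        set N' : Submodule R M := (Submodule.span R {y}).comap N.mkQ with hN'
        have hle : N ≤ N' := by
          intro z hz
          simp only [hN', Submodule.mem_comap, Submodule.mkQ_apply]
          rw [Submodule.Quotient.mk_eq_zero N |>.mpr hz]
          exact Submodule.zero_mem _
        have hlt : N < N' := by
          obtain ⟨x, hxy⟩ := Submodule.mkQ_surjective N y
          refine lt_of_le_of_ne hle (fun hEq => ?_)
          have hxN' : x ∈ N' := by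
            simp only [hN', Submodule.mem_comap, hxy]
            exact Submodule.mem_span_singleton_self y
          rw [← hEq] at hxN'
          exact hy0 (by rw [← hxy, Submodule.mkQ_apply, Submodule.Quotient.mk_eq_zero]; exact hxN')
        obtain ⟨s, hs⟩ := IH N' hlt
        refine ⟨insert p s, ?_⟩
        have hmap : N'.map N.mkQ = Submodule.span R {y} := by
          rw [hN', Submodule.map_comap_eq, Submodule.range_mkQ, top_inf_eq]
        -- equivalence (M ⧸ N) ⧸ span y ≃ M ⧸ N'
        have e2 : ((M ⧸ N) ⧸ (N'.map N.mkQ)) ≃ₗ[R] M ⧸ N' :=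
          Submodule.quotientQuotientEquivQuotient N N' hle
        -- Ass (span y) = {p}
        have hker : LinearMap.ker (LinearMap.toSpanSingleton R (M ⧸ N) y) = p := by
          ext a
          rw [LinearMap.mem_ker, LinearMap.toSpanSingleton_apply, hy,
            Submodule.mem_annihilator_span_singleton]
        have e1 : (R ⧸ p) ≃ₗ[R] ↥(Submodule.span R {y}) :=
          (Submodule.quotEquivOfEq _ _ hker.symm).trans
            ((LinearMap.quotKerEquivRange (LinearMap.toSpanSingleton R (M ⧸ N) y)).trans
              (LinearEquiv.ofEq _ _ (LinearMap.span_singleton_eq_range R (M ⧸ N) y).symm))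
        have hAss1 : associatedPrimes R ↥(Submodule.span R {y}) = {p} := by
          rw [← LinearEquiv.AssociatedPrimes.eq e1,
            associatedPrimes.eq_singleton_of_isPrimary hp1.isPrimary, hp1.radical]
        have hAss2 : associatedPrimes R ((M ⧸ N) ⧸ (Submodule.span R {y})) ⊆ ↑s := by
          rw [← hmap, LinearEquiv.AssociatedPrimes.eq e2]
          exact hs
        intro q hq
        rcases my_assPrime_subset_union (Submodule.span R {y}) hq with h1 | h1
        · rw [hAss1] at h1
          simp only [Finset.coe_insert, Set.mem_insert_iff]
          exact Or.inl (Set.mem_singleton_iff.mp h1)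
        · simp only [Finset.coe_insert, Set.mem_insert_iff]
          exact Or.inr (hAss2 h1)
  obtain ⟨s, hs⟩ := key ⊥
  refine ⟨s, ?_⟩
  rw [LinearEquiv.AssociatedPrimes.eq ((Submodule.quotEquivOfEqBot (⊥ : Submodule R M) rfl).symm)]
  exact hs

end AssFin

theorem my_avoid {A : Type*} [CommRing A] [IsNoetherianRing A] (q : Ideal A) (hq : q.IsPrime)
    (hz : ∀ a ∈ q, a ∉ nonZeroDivisors A) : ∃ p ∈ associatedPrimes A A, q ≤ p := by
  classical
  obtain ⟨s, hs⟩ := my_associatedPrimes_finite (R := A) (M := A)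
  set s' : Finset (Ideal A) := s.filter (fun I => I ∈ associatedPrimes A A) with hs'
  have hcover : (↑q : Set A) ⊆ ⋃ i ∈ (↑s' : Set (Ideal A)), (id i : Ideal A) := by
    intro a ha
    have hzd : a ∈ {r : A | ∃ x : A, x ≠ 0 ∧ r • x = 0} := by
      have := hz a ha
      rw [mem_nonZeroDivisors_iff_right] at this
      push_neg at this
      obtain ⟨x, hx1, hx2⟩ := this
      exact ⟨x, hx2, by rw [smul_eq_mul, mul_comm]; exact hx1⟩
    rw [← biUnion_associatedPrimes_eq_zero_divisors A A] at hzd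
    simp only [Set.mem_iUnion] at hzd ⊢
    obtain ⟨p, hp, hap⟩ := hzd
    exact ⟨p, ⟨Finset.mem_coe.mpr (Finset.mem_filter.mpr ⟨hs hp, hp⟩), hap⟩⟩
  have hprime : ∀ i ∈ s', i ≠ q → i ≠ q → (id i : Ideal A).IsPrime := by
    intro i hi _ _
    exact ((Finset.mem_filter.mp hi).2).isPrime
  rw [Ideal.subset_union_prime q q hprime] at hcover
  obtain ⟨i, hi, hqi⟩ := hcover
  exact ⟨i, (Finset.mem_filter.mp hi).2, hqi⟩

theorem my_isLocalizedModule_pi {R : Type*} [CommRing R] (S : Submonoid R)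
    {N N' : Type*} [AddCommGroup N] [AddCommGroup N'] [Module R N] [Module R N']
    (f : N →ₗ[R] N') [IsLocalizedModule S f] (r : ℕ) :
    IsLocalizedModule S (LinearMap.pi (fun i : Fin r => f ∘ₗ LinearMap.proj i) :
      (Fin r → N) →ₗ[R] (Fin r → N')) := by
  classical
  constructor
  · intro s
    rw [Module.End.isUnit_iff]
    have hbij := (Module.End.isUnit_iff _).mp (IsLocalizedModule.map_units f s)
    constructor
    · intro v w h
      funext i
      have := congrFun (congrArg (fun z => z) h) i
      simp only [Module.algebraMap_end_apply, Pi.smul_apply] at this h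
      exact IsLocalizedModule.smul_injective f s (by simpa [Submonoid.smul_def] using congrFun h i)
    · intro w
      refine ⟨fun i => (hbij.2 (w i)).choose, ?_⟩
      funext i
      have := (hbij.2 (w i)).choose_spec
      simpa only [Module.algebraMap_end_apply, Pi.smul_apply] using this
  · intro y
    have h := fun i => IsLocalizedModule.surj S f (y i)
    refine ⟨⟨fun i => (∏ j ∈ Finset.univ.erase i, (((h j).choose.2 : S) : R)) • (h i).choose.1,
      ∏ i, (h i).choose.2⟩, ?_⟩
    funext i
    have hspec := (h i).choose_spec
    simp only [LinearMap.pi_apply, LinearMap.coe_comp, Function.comp_apply, LinearMap.proj_apply,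
      Pi.smul_apply, map_smul]
    rw [Submonoid.smul_def, SubmonoidClass.coe_finset_prod,
      ← Finset.prod_erase_mul Finset.univ _ (Finset.mem_univ i), mul_smul]
    rw [Submonoid.smul_def] at hspec
    rw [hspec]
  · intro x₁ x₂ h
    have hi : ∀ i, f (x₁ i) = f (x₂ i) := by
      intro i
      simpa using congrFun (congrArg (fun g => g) h) i
    have hc := fun i => IsLocalizedModule.exists_of_eq (S := S) (f := f) (hi i)
    refine ⟨∏ i, (hc i).choose, ?_⟩
    funext i
    have hspec : ((hc i).choose : R) • x₁ i = ((hc i).choose : R) • x₂ i := by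
      simpa [Submonoid.smul_def] using (hc i).choose_spec
    simp only [Pi.smul_apply, Submonoid.smul_def, SubmonoidClass.coe_finset_prod]
    rw [← Finset.prod_erase_mul Finset.univ _ (Finset.mem_univ i), mul_smul, hspec, ← mul_smul,
      Finset.prod_erase_mul Finset.univ _ (Finset.mem_univ i)]

theorem my_inj_to_surj {R : Type*} [CommRing R] [IsLocalRing R] (x : R)
    (hx : ∀ a : R, a * x = 0 ↔ a ∈ IsLocalRing.maximalIdeal R)
    {r : ℕ} {V W : Type*} [AddCommGroup V] [Module R V] [AddCommGroup W] [Module R W]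
    (bV : Module.Basis (Fin r) R V) (bW : Module.Basis (Fin r) R W)
    (ψ : V →ₗ[R] W) (hψ : Function.Injective ψ) : Function.Surjective ψ := by
  classical
  set Mat := LinearMap.toMatrix bV bW ψ with hMatDef
  have hMat : ∀ u : Fin r → R, Mat.mulVec u = 0 → u = 0 := by
    intro u hu
    set v : V := bV.equivFun.symm u with hv
    have hurepr : u = ⇑(bV.repr v) := by
      funext i
      rw [hv, ← Module.Basis.equivFun_apply, bV.equivFun.apply_symm_apply]
    have h1 : Mat.mulVec ⇑(bV.repr v) = ⇑(bW.repr (ψ v)) :=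
      LinearMap.toMatrix_mulVec_repr bV bW ψ v
    rw [← hurepr, hu] at h1
    have h2 : bW.repr (ψ v) = 0 := by
      ext i
      exact (congrFun h1.symm i)
    have h3 : ψ v = 0 := by
      have := bW.repr.map_eq_zero_iff.mp h2
      exact this
    have h4 : v = 0 := hψ (by rw [h3, map_zero])
    rw [hurepr, h4]
    simp
  -- pass to residue field
  let k := IsLocalRing.ResidueField R
  let Mat' : Matrix (Fin r) (Fin r) k := Mat.map (IsLocalRing.residue R)
  have hcompat : ∀ u : Fin r → R,
      Mat'.mulVec (fun i => IsLocalRing.residue R (u i)) =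
        fun i => IsLocalRing.residue R (Mat.mulVec u i) := by
    intro u
    funext i
    simp [Mat', Matrix.mulVec, dotProduct, map_sum, map_mul]
  have hker : ∀ v : Fin r → k, Mat'.mulVec v = 0 → v = 0 := by
    intro v hv
    have hlift : ∀ i, ∃ a : R, IsLocalRing.residue R a = v i :=
      fun i => Ideal.Quotient.mk_surjective (v i)
    set u : Fin r → R := fun i => (hlift i).choose with hu
    have huv : (fun i => IsLocalRing.residue R (u i)) = v := by
      funext i; exact (hlift i).choose_spec
    have h5 : ∀ i, IsLocalRing.residue R (Mat.mulVec u i) = 0 := by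
      intro i
      have := congrFun ((hcompat u).symm.trans (by rw [huv, hv])) i
      exact this.symm ▸ this
    have h6 : ∀ i, Mat.mulVec u i ∈ IsLocalRing.maximalIdeal R := by
      intro i
      exact Ideal.Quotient.eq_zero_iff_mem.mp (h5 i)
    have h7 : Mat.mulVec (x • u) = 0 := by
      rw [Matrix.mulVec_smul]
      funext i
      simp only [Pi.smul_apply, smul_eq_mul, Pi.zero_apply]
      rw [mul_comm]
      exact (hx _).mpr (h6 i)
    have h8 := hMat _ h7
    funext i
    have h9 : x * u i = 0 := by
      have := congrFun h8 i
      simpa using this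
    have h10 : u i ∈ IsLocalRing.maximalIdeal R := (hx (u i)).mp (by rw [mul_comm]; exact h9)
    rw [← huv]
    simp only
    exact Ideal.Quotient.eq_zero_iff_mem.mpr h10
  have hdet' : Mat'.det ≠ 0 := by
    intro h0
    obtain ⟨v, hv0, hv⟩ := (Matrix.exists_mulVec_eq_zero_iff).mpr h0
    exact hv0 (hker v hv)
  have hdet : IsUnit Mat.det := by
    by_contra hnu
    apply hdet'
    have hmem : Mat.det ∈ IsLocalRing.maximalIdeal R :=
      (IsLocalRing.mem_maximalIdeal _).mpr (mem_nonunits_iff.mpr hnu)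
    have hdm : Mat'.det = IsLocalRing.residue R Mat.det := by
      rw [RingHom.map_det]; rfl
    rw [hdm]
    exact Ideal.Quotient.eq_zero_iff_mem.mpr hmem
  have hco : ∀ z, (LinearEquiv.ofIsUnitDet hdet) z = ψ z := fun z =>
    LinearMap.congr_fun (LinearEquiv.coe_ofIsUnitDet hdet) z
  intro w
  refine ⟨(LinearEquiv.ofIsUnitDet hdet).symm w, ?_⟩
  rw [← hco _]
  exact (LinearEquiv.ofIsUnitDet hdet).apply_symm_apply w

theorem my_nzd_le {A : Type*} [CommRing A] [IsNoetherianRing A] (p : Ideal A) [hp : p.IsPrime]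
    (hass : p ∈ associatedPrimes A A) :
    nonZeroDivisors A ≤ p.primeCompl := by
  obtain ⟨hp', x0, hx0⟩ := isAssociatedPrime_iff.mp hass
  rw [Submodule.bot_colon'] at hx0
  have hx0ne : x0 ≠ 0 := by
    rintro rfl
    exact hp'.ne_top (by rw [hx0, Submodule.span_zero_singleton, Submodule.annihilator_bot])
  intro s hs
  show s ∉ p
  intro hsp
  have h1 : s • x0 = 0 := (Submodule.mem_annihilator_span_singleton _ _).mp (by rw [← hx0]; exact hsp)
  have h2 : x0 * s = 0 := by rw [mul_comm]; simpa [smul_eq_mul] using h1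
  exact hx0ne (mem_nonZeroDivisors_iff_right.mp hs x0 h2)

theorem my_exists_annihilator {A : Type*} [CommRing A] [IsNoetherianRing A] (p : Ideal A) [hp : p.IsPrime]
    (hass : p ∈ associatedPrimes A A) :
    ∃ x' : Localization p.primeCompl,
      ∀ a, a * x' = 0 ↔ a ∈ IsLocalRing.maximalIdeal (Localization p.primeCompl) := by
  obtain ⟨hp', x0, hx0⟩ := isAssociatedPrime_iff.mp hass
  rw [Submodule.bot_colon'] at hx0
  set Rp := Localization p.primeCompl
  refine ⟨algebraMap A Rp x0, fun a => ?_⟩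
  obtain ⟨⟨b, s⟩, hbs⟩ := IsLocalization.mk'_surjective p.primeCompl a
  change IsLocalization.mk' (Localization p.primeCompl) b s = a at hbs
  have key : a * algebraMap A Rp x0 = IsLocalization.mk' Rp (b * x0) s := by
    rw [← hbs, IsLocalization.mk'_eq_mul_mk'_one, IsLocalization.mk'_eq_mul_mk'_one (b * x0),
      map_mul]
    ring
  constructor
  · intro h0
    rw [key] at h0
    obtain ⟨t, ht⟩ := (IsLocalization.mk'_eq_zero_iff _ _).mp h0
    have htb : (t : A) * b ∈ p := by
      have : ((t : A) * b) • x0 = 0 := by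
        rw [smul_eq_mul]
        rw [mul_assoc]
        exact ht
      have h' := (Submodule.mem_annihilator_span_singleton _ _).mpr this
      rwa [← hx0] at h'
    have hb : b ∈ p := by
      rcases hp'.mem_or_mem htb with h | h
      · exact absurd h t.2
      · exact h
    rw [← hbs, IsLocalization.mk'_eq_mul_mk'_one]
    rw [← Localization.AtPrime.map_eq_maximalIdeal (I := p)]
    exact Ideal.mul_mem_right _ _ (Ideal.mem_map_of_mem _ hb)
  · intro hmem
    have hb : b ∈ p := by
      by_contra hbp
      have : IsUnit a := by
        rw [← hbs]
        exact (IsLocalization.AtPrime.isUnit_mk'_iff Rp _ b s).mpr hbp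
      exact ((IsLocalRing.mem_maximalIdeal _).mp hmem) this
    have hbx : b * x0 = 0 := by
      simpa [smul_eq_mul] using (Submodule.mem_annihilator_span_singleton x0 b).mp (by rw [← hx0]; exact hb)
    rw [key, hbx]
    simp

/-- Let `A` be a Noetherian commutative ring, `M` a finite `A`-module with an
`A`-linear injection `ι : M ↪ Q(A)^r` into the `r`-th power of the total ring of fractions.
If `M_p` is a free `A_p`-module of rank at least `r` for every associated prime `p` of `A`,
then the induced map `M ⊗_A Q(A) → Q(A)^r` is an isomorphism (bijective). -/
theorem stmt_6 (A : Type*) [CommRing A] [IsNoetherianRing A]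
    (M : Type*) [AddCommGroup M] [Module A M] [Module.Finite A M]
    (r : ℕ) (ι : M →ₗ[A] (Fin r → FractionRing A)) (hι : Function.Injective ι)
    (hfree : ∀ p : {q : Ideal A // q ∈ associatedPrimes A A},
      Module.Free (Localization (p.1.primeCompl (hp := p.2.isPrime)))
        (LocalizedModule (p.1.primeCompl (hp := p.2.isPrime)) M) ∧
      (r : Cardinal) ≤ Module.rank (Localization (p.1.primeCompl (hp := p.2.isPrime)))
        (LocalizedModule (p.1.primeCompl (hp := p.2.isPrime)) M)) :
    Function.Bijective (ι.liftBaseChange (FractionRing A)) := by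
  classical
  set Q := FractionRing A with hQdef
  set S := nonZeroDivisors A with hSdef
  -- the canonical map `j : M → M ⊗[A] Q` is a localization at `S`
  let j : M →ₗ[A] Q ⊗[A] M := TensorProduct.mk A Q M 1
  haveI hj : IsLocalizedModule S j :=
    (isLocalizedModule_iff_isBaseChange S Q j).mpr (TensorProduct.isBaseChange A M Q)
  have hFj : ∀ m : M, (ι.liftBaseChange Q) (j m) = ι m := by
    intro m
    show (ι.liftBaseChange Q) ((1 : Q) ⊗ₜ[A] m) = ι m
    rw [LinearMap.liftBaseChange_tmul, one_smul]
  -- injectivity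
  have hFker : ∀ z, (ι.liftBaseChange Q) z = 0 → z = 0 := by
    intro z hz
    obtain ⟨⟨m, s⟩, hms⟩ := IsLocalizedModule.surj S j z
    have h1 : ι m = 0 := by
      rw [← hFj m, ← hms, Submonoid.smul_def, ← algebraMap_smul Q (s : A) z, map_smul, hz,
        smul_zero]
    have h2 : m = 0 := hι (by rw [h1, map_zero])
    rw [h2, map_zero] at hms
    exact IsLocalizedModule.smul_injective (S := S) j s
      (show s • z = s • 0 by rw [smul_zero]; exact hms)
  have hFinj : Function.Injective (ι.liftBaseChange Q) := by
    intro z w hzw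
    have := hFker (z - w) (by rw [map_sub, hzw, sub_self])
    exact sub_eq_zero.mp this
  refine ⟨hFinj, ?_⟩
  -- surjectivity
  rw [← LinearMap.range_eq_top]
  by_contra hne
  set N := LinearMap.range (ι.liftBaseChange Q) with hNdef
  haveI : Nontrivial ((Fin r → Q) ⧸ N) :=
    Submodule.Quotient.nontrivial_iff.mpr hne
  haveI hQnoeth : IsNoetherianRing Q := IsLocalization.isNoetherianRing S Q inferInstance
  obtain ⟨P, hPA⟩ := associatedPrimes.nonempty Q ((Fin r → Q) ⧸ N)
  obtain ⟨hPprime, y, hy⟩ := isAssociatedPrime_iff.mp hPA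
  rw [Submodule.bot_colon'] at hy
  have hy0 : y ≠ 0 := by
    rintro rfl
    exact hPprime.ne_top (by rw [hy, Submodule.span_zero_singleton, Submodule.annihilator_bot])
  set p' : Ideal A := P.comap (algebraMap A Q) with hp'def
  haveI hp'prime : p'.IsPrime := Ideal.IsPrime.comap _
  have hzd : ∀ a ∈ p', a ∉ nonZeroDivisors A := by
    intro a ha hnz
    have hu : IsUnit (algebraMap A Q a) := IsLocalization.map_units Q ⟨a, hnz⟩
    exact hPprime.ne_top (P.eq_top_of_isUnit_mem ha hu)
  obtain ⟨p, hpass, hp'p⟩ := my_avoid p' hp'prime hzd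
  haveI hpprime : p.IsPrime := hpass.isPrime
  obtain ⟨hfree1, hrank⟩ := hfree ⟨p, hpass⟩
  set T := p.primeCompl with hTdef
  set Rp := Localization T with hRpdef
  have hST : S ≤ T := my_nzd_le p hpass
  -- the localized map ψ : M_p → Rp^r
  let hQmap : Q →ₗ[A] Rp :=
    IsLocalizedModule.liftOfLE S T hST (Algebra.linearMap A Q) (Algebra.linearMap A Rp)
  let π : (Fin r → Q) →ₗ[A] (Fin r → Rp) := LinearMap.pi (fun i => hQmap ∘ₗ LinearMap.proj i)
  haveI hπ : IsLocalizedModule T π := my_isLocalizedModule_pi T hQmap r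
  let g1 := LocalizedModule.mkLinearMap T M
  let ψA : LocalizedModule T M →ₗ[A] (Fin r → Rp) := IsLocalizedModule.map T g1 π ι
  have hψinj : Function.Injective ψA := IsLocalizedModule.map_injective T g1 π ι hι
  let ψ : LocalizedModule T M →ₗ[Rp] (Fin r → Rp) :=
    LinearMap.extendScalarsOfIsLocalization T Rp ψA
  have hψinj' : Function.Injective ψ := hψinj
  haveI := hfree1
  -- rank computation
  have hrankLM : Module.rank Rp (LocalizedModule T M) = r := by
    have h1 := LinearMap.lift_rank_le_of_injective _ hψinj'
    have h2 : Module.rank Rp (Fin r → Rp) = r := by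
      rw [rank_fun']; simp
    rw [h2] at h1
    refine le_antisymm ?_ hrank
    simp only [Cardinal.lift_natCast] at h1
    exact (Cardinal.lift_le_nat_iff).mp h1
  let ι' := Module.Free.ChooseBasisIndex Rp (LocalizedModule T M)
  have hcard : Cardinal.mk ι' = r := by
    rw [← Module.Free.rank_eq_card_chooseBasisIndex, hrankLM]
  haveI : Finite ι' := by
    rw [← Cardinal.lt_aleph0_iff_finite, hcard]
    exact Cardinal.nat_lt_aleph0 r
  haveI : Fintype ι' := Fintype.ofFinite ι'
  have hcard' : Fintype.card ι' = r := by
    have h := hcard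
    rwa [Cardinal.mk_fintype, Nat.cast_inj] at h
  let bV : Module.Basis (Fin r) Rp (LocalizedModule T M) :=
    (Module.Free.chooseBasis Rp (LocalizedModule T M)).reindex (Fintype.equivFinOfCardEq hcard')
  let bW : Module.Basis (Fin r) Rp (Fin r → Rp) := Pi.basisFun Rp (Fin r)
  obtain ⟨x', hx'⟩ := my_exists_annihilator p hpass
  have hψsurj : Function.Surjective ψ := my_inj_to_surj x' hx' bV bW ψ hψinj'
  -- extract the surjectivity over `A` with denominators in `T`
  have hSurj : ∀ v : Fin r → Q, ∃ (m : M) (t : A), t ∈ T ∧ ι m = t • v := by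
    intro v
    obtain ⟨z, hz⟩ := hψsurj (π v)
    obtain ⟨⟨m, s⟩, hms⟩ := IsLocalizedModule.surj T g1 z
    have h1 : π (ι m) = π ((s : A) • v) := by
      have h2 : ψA (g1 m) = π (ι m) := IsLocalizedModule.map_apply T g1 π ι m
      have h3 : ψA z = π v := hz
      calc π (ι m) = ψA (g1 m) := h2.symm
        _ = ψA ((s : A) • z) := by rw [← Submonoid.smul_def, hms]
        _ = (s : A) • ψA z := by rw [map_smul]
        _ = (s : A) • π v := by rw [h3]
        _ = π ((s : A) • v) := by rw [map_smul]
    obtain ⟨c, hc⟩ := IsLocalizedModule.exists_of_eq (S := T) (f := π) h1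
    refine ⟨c • m, (c : A) * s, mul_mem c.2 s.2, ?_⟩
    have hc' : (c : A) • ι m = (c : A) • ((s : A) • v) := by
      simpa [Submonoid.smul_def] using hc
    rw [Submonoid.smul_def, map_smul, hc', smul_smul]
  -- contradiction
  obtain ⟨v, hv⟩ := Submodule.Quotient.mk_surjective N y
  obtain ⟨m, t, htT, hmt⟩ := hSurj v
  have h5 : (algebraMap A Q t) • y = 0 := by
    rw [← hv, ← Submodule.Quotient.mk_smul, Submodule.Quotient.mk_eq_zero]
    refine ⟨j m, ?_⟩
    rw [hFj m, hmt, algebraMap_smul]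
  have h6 : t ∈ p' := by
    show algebraMap A Q t ∈ P
    rw [hy]
    exact (Submodule.mem_annihilator_span_singleton _ _).mpr h5
  exact htT (hp'p h6)
end

section
/- Let A be a Noetherian commutative ring and M a finite A-module. Then M has rank r in the sense that M ⊗_A Q(A) ≅ Q(A)^r if and only if M_p is a free A_p-module of rank r for every associated prime p of A. -/
open TensorProduct

lemma my_fwd {A : Type*} [CommRing A] {M : Type*} [AddCommGroup M] [Module A M]
    [Module.Finite A M] (r : ℕ) (S : Submonoid A) (p : Ideal A) [hp : p.IsPrime]
    (hp' : S ≤ p.primeCompl)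
    (hfree : Module.Free (Localization S) (LocalizedModule S M))
    (hrank : Module.finrank (Localization S) (LocalizedModule S M) = r) :
    Nonempty (Module.Basis (Fin r) (Localization.AtPrime p) (LocalizedModule p.primeCompl M)) := by
  let Rₚ := Localization.AtPrime p
  let Mₚ := LocalizedModule p.primeCompl M
  letI : Algebra (Localization S) Rₚ :=
    IsLocalization.localizationAlgebraOfSubmonoidLe _ _ S p.primeCompl hp'
  have : IsScalarTower A (Localization S) Rₚ :=
    IsLocalization.localization_isScalarTower_of_submonoid_le ..
  have hloc : IsLocalization (Algebra.algebraMapSubmonoid (Localization S) p.primeCompl) Rₚ :=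
    IsLocalization.isLocalization_of_submonoid_le (Localization S) Rₚ _ _ hp'
  letI : Module (Localization S) Mₚ := Module.compHom Mₚ (algebraMap (Localization S) Rₚ)
  have : IsScalarTower A (Localization S) Mₚ :=
    ⟨fun r r' m ↦ show algebraMap _ Rₚ (r • r') • m = _ by
      simp [Algebra.smul_def, ← IsScalarTower.algebraMap_apply, mul_smul]; rfl⟩
  have : IsScalarTower (Localization S) Rₚ Mₚ :=
    ⟨fun r r' m ↦ show _ = algebraMap _ Rₚ r • (r' • m) by rw [← mul_smul, ← Algebra.smul_def]⟩
  let l := (IsLocalizedModule.liftOfLE _ _ hp' (LocalizedModule.mkLinearMap S M)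
    (LocalizedModule.mkLinearMap p.primeCompl M)).extendScalarsOfIsLocalization S
    (Localization S)
  have : IsLocalizedModule p.primeCompl (l.restrictScalars A) :=
    inferInstanceAs (IsLocalizedModule p.primeCompl
      (IsLocalizedModule.liftOfLE _ _ hp' (LocalizedModule.mkLinearMap S M)
      (LocalizedModule.mkLinearMap p.primeCompl M)))
  have hlm : IsLocalizedModule (Algebra.algebraMapSubmonoid (Localization S) p.primeCompl) l :=
    IsLocalizedModule.of_restrictScalars p.primeCompl ..
  have hfree' : Module.Free Rₚ Mₚ :=
    Module.free_of_isLocalizedModule (Algebra.algebraMapSubmonoid (Localization S) p.primeCompl) l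
  have hfin : Module.Finite Rₚ Mₚ :=
    Module.Finite.of_isLocalizedModule p.primeCompl (LocalizedModule.mkLinearMap p.primeCompl M)
  have hrk : Module.finrank Rₚ Mₚ = r := by
    rw [Module.finrank_of_isLocalizedModule_of_free Rₚ
      (Algebra.algebraMapSubmonoid (Localization S) p.primeCompl) l, hrank]
  exact ⟨Module.finBasisOfFinrankEq Rₚ Mₚ hrk⟩

lemma my_bwd {A : Type*} [CommRing A] {M : Type*} [AddCommGroup M] [Module A M]
    (r : ℕ) (S : Submonoid A) (P : Ideal (Localization S)) [hP : P.IsPrime]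
    (h : Nonempty (Module.Basis (Fin r)
      (Localization.AtPrime (P.comap (algebraMap A (Localization S))))
      (LocalizedModule (P.comap (algebraMap A (Localization S))).primeCompl M))) :
    Nonempty (Module.Basis (Fin r) (Localization.AtPrime P)
      (LocalizedModule P.primeCompl (LocalizedModule S M))) := by
  obtain ⟨b⟩ := h
  let p' := P.comap (algebraMap A (Localization S))
  have hp' : S ≤ p'.primeCompl := fun x hx H ↦
    hP.ne_top (Ideal.eq_top_of_isUnit_mem _ H (IsLocalization.map_units _ ⟨x, hx⟩))
  let Rₚ := Localization.AtPrime p'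
  let Mₚ := LocalizedModule p'.primeCompl M
  letI : Algebra (Localization S) Rₚ :=
    IsLocalization.localizationAlgebraOfSubmonoidLe _ _ S p'.primeCompl hp'
  have : IsScalarTower A (Localization S) Rₚ :=
    IsLocalization.localization_isScalarTower_of_submonoid_le ..
  have : IsLocalization.AtPrime Rₚ P := by
    have := IsLocalization.isLocalization_of_submonoid_le (Localization S) Rₚ _ _ hp'
    apply IsLocalization.isLocalization_of_is_exists_mul_mem _
      (Submonoid.map (algebraMap A (Localization S)) p'.primeCompl)
    · rintro _ ⟨x, hx, rfl⟩; exact hx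
    · rintro ⟨x, hx⟩
      obtain ⟨⟨x, s⟩, rfl⟩ := IsLocalization.mk'_surjective S x
      refine ⟨algebraMap _ _ s.1, x, fun H ↦ hx ?_, by simp⟩
      dsimp only; rw [IsLocalization.mk'_eq_mul_mk'_one]
      exact Ideal.mul_mem_right _ _ H
  letI : Module (Localization S) Mₚ := Module.compHom Mₚ (algebraMap _ Rₚ)
  have : IsScalarTower A (Localization S) Mₚ :=
    ⟨fun r r' m ↦ show algebraMap _ Rₚ (r • r') • m = _ by
      simp [Algebra.smul_def, ← IsScalarTower.algebraMap_apply, mul_smul]; rfl⟩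
  have : IsScalarTower (Localization S) Rₚ Mₚ :=
    ⟨fun r r' m ↦ show _ = algebraMap _ Rₚ r • (r' • m) by rw [← mul_smul, ← Algebra.smul_def]⟩
  let l := (IsLocalizedModule.liftOfLE _ _ hp' (LocalizedModule.mkLinearMap S M)
    (LocalizedModule.mkLinearMap p'.primeCompl M)).extendScalarsOfIsLocalization S
    (Localization S)
  have : IsLocalizedModule P.primeCompl l := by
    have : IsLocalizedModule p'.primeCompl (l.restrictScalars A) :=
      inferInstanceAs (IsLocalizedModule p'.primeCompl
        (IsLocalizedModule.liftOfLE _ _ hp' (LocalizedModule.mkLinearMap S M)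
        (LocalizedModule.mkLinearMap p'.primeCompl M)))
    have : IsLocalizedModule (Algebra.algebraMapSubmonoid (Localization S) p'.primeCompl) l :=
      IsLocalizedModule.of_restrictScalars p'.primeCompl ..
    apply IsLocalizedModule.of_exists_mul_mem
      (Algebra.algebraMapSubmonoid (Localization S) p'.primeCompl)
    · rintro _ ⟨x, hx, rfl⟩; exact hx
    · rintro ⟨x, hx⟩
      obtain ⟨⟨x, s⟩, rfl⟩ := IsLocalization.mk'_surjective S x
      refine ⟨algebraMap _ _ s.1, x, fun H ↦ hx ?_, by simp⟩
      dsimp only; rw [IsLocalization.mk'_eq_mul_mk'_one]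
      exact Ideal.mul_mem_right _ _ H
  -- now build the equivalence
  let L := Localization.AtPrime P
  let e1 : LocalizedModule P.primeCompl (LocalizedModule S M) ≃ₗ[Localization S] Mₚ :=
    IsLocalizedModule.iso P.primeCompl l
  let e2 : Mₚ ≃ₗ[Localization S] (Fin r → Rₚ) := b.equivFun.restrictScalars (Localization S)
  let α : L ≃ₐ[Localization S] Rₚ := IsLocalization.algEquiv P.primeCompl L Rₚ
  let e3 : (Fin r → Rₚ) ≃ₗ[Localization S] (Fin r → L) :=
    LinearEquiv.piCongrRight (fun _ => α.symm.toLinearEquiv)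
  let E := e1.trans (e2.trans e3)
  let E' := E.toLinearMap.extendScalarsOfIsLocalization P.primeCompl L
  exact ⟨Module.Basis.ofEquivFun (LinearEquiv.ofBijective E' E.bijective)⟩

lemma my_end {R : Type*} [CommRing R] {N : Type*} [AddCommGroup N] [Module R N]
    [Module.Finite R N] (r : ℕ)
    (hfin : {P : Ideal R | P.IsMaximal}.Finite)
    (h : ∀ (P : Ideal R) (hP : P.IsMaximal),
      Nonempty (Module.Basis (Fin r) (Localization (P.primeCompl (hp := hP.isPrime)))
        (LocalizedModule (P.primeCompl (hp := hP.isPrime)) N))) :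
    Nonempty (N ≃ₗ[R] (Fin r → R)) := by
  classical
  rcases subsingleton_or_nontrivial R with hR | hR
  · haveI : Subsingleton N := Module.subsingleton R N
    exact ⟨{ toFun := fun _ => 0, map_add' := by intros; simp, map_smul' := by intros; simp,
             invFun := fun _ => 0, left_inv := fun x => Subsingleton.elim _ _,
             right_inv := fun x => Subsingleton.elim _ _ }⟩
  haveI : Finite {P : Ideal R // P.IsMaximal} := hfin
  haveI : Fintype {P : Ideal R // P.IsMaximal} := Fintype.ofFinite _
  set T := {P : Ideal R // P.IsMaximal} with hT
  -- numerators of bases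
  have hbase : ∀ i : T, ∃ n : Fin r → N,
      Submodule.span (Localization (i.1.primeCompl (hp := i.2.isPrime)))
        (Set.range fun j => LocalizedModule.mk (n j)
          (1 : (i.1.primeCompl (hp := i.2.isPrime)))) = ⊤ := by
    rintro ⟨P, hP⟩
    haveI := hP.isPrime
    obtain ⟨b⟩ := h P hP
    have hnum : ∀ j, ∃ q : N × P.primeCompl, LocalizedModule.mk q.1 q.2 = b j := fun j =>
      LocalizedModule.induction_on (fun m s => ⟨⟨m, s⟩, rfl⟩) (b j)
    choose q hq using hnum
    let w : Fin r → (Localization P.primeCompl)ˣ :=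
      fun j => (IsLocalization.map_units (M := P.primeCompl) (Localization P.primeCompl)
        (q j).2).unit
    refine ⟨fun j => (q j).1, ?_⟩
    have heq : ∀ j, (b.unitsSMul w) j = LocalizedModule.mk (q j).1 1 := by
      intro j
      rw [Module.Basis.unitsSMul_apply, ← hq j]
      show (algebraMap R (Localization P.primeCompl) (q j).2) •
          LocalizedModule.mk (q j).1 (q j).2 = LocalizedModule.mk (q j).1 1
      rw [algebraMap_smul, LocalizedModule.smul'_mk]
      exact LocalizedModule.mk_cancel _ _
    rw [show (fun j => LocalizedModule.mk ((fun j => (q j).1) j)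
        (1 : P.primeCompl)) = (b.unitsSMul w) from (funext heq).symm]
    exact (b.unitsSMul w).span_eq
  choose n hn using hbase
  -- CRT elements
  have hco : Pairwise (Function.onFun IsCoprime fun i : T => i.1) := fun i j hij =>
    (Ideal.isCoprime_iff_sup_eq).mpr
      (Ideal.IsMaximal.coprime_of_ne i.2 j.2 (fun hh => hij (Subtype.ext hh)))
  have key : ∀ i : T, ∃ e : R, Ideal.Quotient.mk i.1 e = 1 ∧
      ∀ j : T, j ≠ i → Ideal.Quotient.mk j.1 e = 0 := by
    intro i
    obtain ⟨y, hy⟩ := Ideal.quotientInfToPiQuotient_surj hco (Pi.single i 1)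
    obtain ⟨x, rfl⟩ := Ideal.Quotient.mk_surjective y
    refine ⟨x, ?_, fun j hj => ?_⟩
    · have := congrFun hy i
      rwa [Ideal.quotientInfToPiQuotient_mk', Pi.single_eq_same] at this
    · have := congrFun hy j
      rwa [Ideal.quotientInfToPiQuotient_mk', Pi.single_eq_of_ne hj] at this
  choose e he0 he1 using key
  -- global map
  set z : Fin r → N := fun j => ∑ i : T, e i • n i j with hz
  set φ : (Fin r → R) →ₗ[R] N := ((Pi.basisFun R (Fin r)).constr R) z with hφ
  have hφz : ∀ j, φ (Pi.single j 1) = z j := by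
    intro j
    have := (Pi.basisFun R (Fin r)).constr_basis R z j
    rwa [Pi.basisFun_apply] at this
  -- local bijectivity at each maximal ideal
  have hloc : ∀ (P : Ideal R) (hP : P.IsMaximal),
      Function.Bijective (LocalizedModule.map (P.primeCompl (hp := hP.isPrime)) φ) := by
    intro P hP
    haveI := hP.isPrime
    set i : T := ⟨P, hP⟩ with hi
    set L := Localization P.primeCompl with hL
    set g := LocalizedModule.map P.primeCompl φ with hg
    haveI : Module.Finite L (LocalizedModule P.primeCompl N) :=
      Module.Finite.of_isLocalizedModule P.primeCompl (LocalizedModule.mkLinearMap P.primeCompl N)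
    have hsurj : Function.Surjective g := by
      rw [← LinearMap.range_eq_top]
      set F := LocalizedModule.mkLinearMap P.primeCompl N with hF
      have hFmk : ∀ m : N, F m = LocalizedModule.mk m 1 := fun m => rfl
      set MP := Submodule.span L (Set.range fun j => F (z j)) with hMP
      set PL := P.map (algebraMap R L) with hPL
      have htop : MP ⊔ PL • (⊤ : Submodule L (LocalizedModule P.primeCompl N)) = ⊤ := by
        rw [← top_le_iff]
        refine le_trans (hn i).ge (Submodule.span_le.mpr ?_)
        rintro _ ⟨j, rfl⟩
        show F (n i j) ∈ (MP ⊔ PL • ⊤ : Submodule L (LocalizedModule P.primeCompl N))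
        have hd : ∀ k : T, (if k = i then e k - 1 else e k) ∈ P := by
          intro k
          by_cases hk : k = i
          · subst hk
            rw [if_pos rfl, ← Ideal.Quotient.eq_zero_iff_mem, map_sub, map_one,
              show ((Ideal.Quotient.mk P) (e i) : R ⧸ P) = 1 from he0 i, sub_self]
          · rw [if_neg hk, ← Ideal.Quotient.eq_zero_iff_mem]
            exact he1 k i (Ne.symm hk)
        have hzn : F (z j) - F (n i j)
            = ∑ k : T, (algebraMap R L (if k = i then e k - 1 else e k)) • F (n k j) := by
          rw [← map_sub]
          have hsub : z j - n i j = ∑ k : T, (if k = i then e k - 1 else e k) • n k j := by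
            have : ∀ k : T, (if k = i then e k - 1 else e k) • n k j
                = e k • n k j - (if k = i then n k j else 0) := by
              intro k
              by_cases hk : k = i
              · simp only [if_pos hk, sub_smul, one_smul]
              · simp only [if_neg hk, sub_zero]
            rw [Finset.sum_congr rfl fun k _ => this k, Finset.sum_sub_distrib, hz]
            simp [Finset.sum_ite_eq', Finset.sum_ite_eq]
            rw [Finset.sum_eq_single i (fun b _ hb => if_neg hb) (fun h => absurd (Finset.mem_univ i) h), if_pos rfl]
          rw [hsub, map_sum]
          exact Finset.sum_congr rfl fun k _ => by rw [map_smul, algebraMap_smul]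
        have h1 : F (z j) ∈ MP ⊔ PL • ⊤ :=
          Submodule.mem_sup_left (Submodule.subset_span ⟨j, rfl⟩)
        have h2 : F (z j) - F (n i j) ∈ MP ⊔ PL • ⊤ := by
          rw [hzn]
          refine Submodule.sum_mem _ fun k _ => Submodule.mem_sup_right ?_
          exact Submodule.smul_mem_smul (Ideal.mem_map_of_mem _ (hd k)) trivial
        have h3 : F (z j) - (F (z j) - F (n i j)) ∈ MP ⊔ PL • ⊤ := Submodule.sub_mem _ h1 h2
        rwa [sub_sub_cancel] at h3
      have hjac : PL ≤ (⊥ : Ideal L).jacobson := by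
        rw [IsLocalRing.jacobson_eq_maximalIdeal ⊥ bot_ne_top, hPL]
        exact le_of_eq (Localization.AtPrime.map_eq_maximalIdeal)
      have hMPtop : MP = ⊤ := by
        have hfg : (⊤ : Submodule L (LocalizedModule P.primeCompl N ⧸ MP)).FG :=
          Module.finite_def.mp inferInstance
        have hle : (⊤ : Submodule L (LocalizedModule P.primeCompl N ⧸ MP)) ≤ PL • ⊤ := by
          have h1 : Submodule.map MP.mkQ (MP ⊔ PL • ⊤) = ⊤ := by
            rw [htop, Submodule.map_top, Submodule.range_mkQ]
          rw [Submodule.map_sup, Submodule.map_smul'', Submodule.map_top,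
            Submodule.range_mkQ] at h1
          have h2 : Submodule.map MP.mkQ MP = ⊥ := by simp
          rw [h2, bot_sup_eq] at h1
          exact h1.ge
        have := Submodule.eq_bot_of_le_smul_of_le_jacobson_bot PL ⊤ hfg hle hjac
        have hss : Subsingleton (LocalizedModule P.primeCompl N ⧸ MP) := by
          constructor
          intro a b
          have ha : a ∈ (⊤ : Submodule L _) := trivial
          have hb : b ∈ (⊤ : Submodule L _) := trivial
          rw [this, Submodule.mem_bot] at ha hb
          rw [ha, hb]
        exact (Submodule.Quotient.subsingleton_iff).mp hss
      rw [← top_le_iff, ← hMPtop, Submodule.span_le]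
      rintro _ ⟨j, rfl⟩
      exact ⟨LocalizedModule.mk (Pi.single j 1) 1, by
        show LocalizedModule.map P.primeCompl φ (LocalizedModule.mk (Pi.single j 1) 1) = _
        rw [LocalizedModule.map_mk, hφz]; rfl⟩
    -- injectivity
    haveI : Module.Finite L (LocalizedModule P.primeCompl (Fin r → R)) :=
      Module.Finite.of_isLocalizedModule P.primeCompl
        (LocalizedModule.mkLinearMap P.primeCompl (Fin r → R))
    haveI : Module.Free L (LocalizedModule P.primeCompl (Fin r → R)) :=
      Module.free_of_isLocalizedModule P.primeCompl
        (LocalizedModule.mkLinearMap P.primeCompl (Fin r → R))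
    have hXrank : Module.finrank L (LocalizedModule P.primeCompl (Fin r → R)) = r := by
      rw [Module.finrank_of_isLocalizedModule_of_free L P.primeCompl
        (LocalizedModule.mkLinearMap P.primeCompl (Fin r → R)), Module.finrank_pi]
      exact Fintype.card_fin r
    let δ : Module.Basis (Fin r) L (LocalizedModule P.primeCompl (Fin r → R)) :=
      Module.finBasisOfFinrankEq L _ hXrank
    obtain ⟨c⟩ := h P hP
    let endo : (Fin r → L) →ₗ[L] (Fin r → L) :=
      (c.equivFun.toLinearMap.comp g).comp δ.equivFun.symm.toLinearMap
    have hes : Function.Surjective endo :=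
      c.equivFun.surjective.comp (hsurj.comp δ.equivFun.symm.surjective)
    have hei : Function.Injective endo :=
      OrzechProperty.injective_of_surjective_endomorphism endo hes
    refine ⟨fun x y hxy => ?_, hsurj⟩
    have h1 : endo (δ.equivFun x) = endo (δ.equivFun y) := by
      simp only [endo, LinearMap.coe_comp, LinearEquiv.coe_coe, Function.comp_apply,
        LinearEquiv.symm_apply_apply, hxy]
    exact δ.equivFun.injective (hei h1)
  -- global bijectivity
  have hinj : Function.Injective φ := by
    intro x y hxy
    refine Module.eq_of_localization_maximal (R := R)
      (Mₚ := fun P hP => LocalizedModule (P.primeCompl (hp := hP.isPrime)) (Fin r → R))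
      (f := fun P hP => LocalizedModule.mkLinearMap (P.primeCompl (hp := hP.isPrime)) (Fin r → R))
      x y (fun P hP => ?_)
    haveI := hP.isPrime
    have := (hloc P hP).1
    apply this
    show LocalizedModule.map P.primeCompl φ (LocalizedModule.mk x 1)
      = LocalizedModule.map P.primeCompl φ (LocalizedModule.mk y 1)
    rw [LocalizedModule.map_mk, LocalizedModule.map_mk, hxy]
  have hsurj : Function.Surjective φ := by
    rw [← LinearMap.range_eq_top]
    refine Submodule.eq_top_of_localization₀_maximal (R := R)
      (Mₚ := fun P hP => LocalizedModule (P.primeCompl (hp := hP.isPrime)) N)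
      (f := fun P hP => LocalizedModule.mkLinearMap (P.primeCompl (hp := hP.isPrime)) N)
      _ (fun P hP => ?_)
    haveI := hP.isPrime
    rw [← top_le_iff]
    intro x _
    obtain ⟨ξ, rfl⟩ := (hloc P hP).2 x
    obtain ⟨w, t, rfl⟩ : ∃ w t, LocalizedModule.mk w t = ξ :=
      LocalizedModule.induction_on (fun m s => ⟨m, s, rfl⟩) ξ
    rw [show (LocalizedModule.map P.primeCompl φ) (LocalizedModule.mk w t)
      = LocalizedModule.mk (φ w) t from LocalizedModule.map_mk _ _ _ _]
    exact ⟨φ w, ⟨w, rfl⟩, t, (IsLocalizedModule.mk_eq_mk' t (φ w)).symm⟩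
  exact ⟨(LinearEquiv.ofBijective φ ⟨hinj, hsurj⟩).symm⟩


section AssFin
variable {R : Type*} [CommRing R] [IsNoetherianRing R]

lemma my_ass_pi {ι : Type*} [Fintype ι] (M : ι → Type*) [∀ i, AddCommGroup (M i)]
    [∀ i, Module R (M i)] :
    associatedPrimes R (∀ i, M i) ⊆ ⋃ i, associatedPrimes R (M i) := by
  intro p hp'
  obtain ⟨hp, x, hx⟩ := isAssociatedPrime_iff.mp hp'
  rw [Submodule.bot_colon'] at hx
  subst hx
  have key : (Finset.univ.inf fun i => (R ∙ x i).annihilator) ≤ (R ∙ x).annihilator := by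
    intro a ha
    rw [Submodule.mem_annihilator_span_singleton]
    funext i
    simp only [Finset.inf_le (Finset.mem_univ i), Submodule.mem_finsetInf] at ha
    have := ha i (Finset.mem_univ i)
    rw [Submodule.mem_annihilator_span_singleton] at this
    exact this
  obtain ⟨i, -, hi⟩ := hp.inf_le'.mp key
  refine Set.mem_iUnion.mpr ⟨i, isAssociatedPrime_iff.mpr ⟨hp, x i, ?_⟩⟩
  rw [Submodule.bot_colon']
  refine le_antisymm ?_ hi
  intro a ha
  rw [Submodule.mem_annihilator_span_singleton] at ha ⊢
  exact congrFun ha i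

end AssFin

lemma my_ass_finite (R : Type*) [CommRing R] [IsNoetherianRing R] :
    (associatedPrimes R R).Finite := by
  classical
  obtain ⟨s, hs, hprim⟩ := Submodule.isLasker R R ⊥
  let f : R →ₗ[R] (∀ J : s, R ⧸ (J : Ideal R)) :=
    LinearMap.pi fun J => Submodule.mkQ (J : Ideal R)
  have hf : Function.Injective f := by
    rw [← LinearMap.ker_eq_bot]
    ext x
    simp only [LinearMap.mem_ker, Submodule.mem_bot, f, funext_iff, LinearMap.pi_apply,
      Submodule.mkQ_apply, Pi.zero_apply, Submodule.Quotient.mk_eq_zero, Subtype.forall]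
    constructor
    · intro h
      have : x ∈ s.inf id := Submodule.mem_finsetInf.mpr fun i hi => h i hi
      rwa [hs, Submodule.mem_bot] at this
    · rintro rfl i hi; exact zero_mem _
  have h1 := associatedPrimes.subset_of_injective hf
  have h2 := my_ass_pi (R := R) (fun J : s => R ⧸ (J : Ideal R))
  refine Set.Finite.subset (Set.finite_iUnion
    (f := fun J : s => ({Ideal.radical (J : Ideal R)} : Set (Ideal R)))
    fun J => Set.finite_singleton _) ?_
  intro p hp
  have := h2 (h1 hp)
  rw [Set.mem_iUnion] at this ⊢
  obtain ⟨J, hJ⟩ := this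
  exact ⟨J, by rwa [associatedPrimes.eq_singleton_of_isPrimary (hprim J.2)] at hJ⟩

section Glue
open nonZeroDivisors

variable (A : Type*) [CommRing A] [IsNoetherianRing A]

lemma my_disj {q : Ideal A} (hq : q ∈ associatedPrimes A A) :
    Disjoint ((A⁰ : Submonoid A) : Set A) (q : Set A) := by
  obtain ⟨hqp, x, hx⟩ := isAssociatedPrime_iff.mp hq
  rw [Submodule.bot_colon'] at hx
  rw [Set.disjoint_left]
  intro a ha haq
  have hx0 : x ≠ 0 := by
    rintro rfl
    rw [Submodule.span_zero_singleton, Submodule.annihilator_bot] at hx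
    exact hqp.ne_top hx
  rw [hx, SetLike.mem_coe, Submodule.mem_annihilator_span_singleton] at haq
  exact hx0 (mem_nonZeroDivisors_iff_right.mp ha x (by rw [mul_comm, ← smul_eq_mul, haq]))

lemma my_comap_mem (P : Ideal (FractionRing A)) (hP : P.IsMaximal) :
    P.comap (algebraMap A (FractionRing A)) ∈ associatedPrimes A A ∧
      P = (P.comap (algebraMap A (FractionRing A))).map (algebraMap A (FractionRing A)) := by
  classical
  set K := FractionRing A
  set p := P.comap (algebraMap A K) with hp
  haveI := hP.isPrime
  haveI : p.IsPrime := Ideal.IsPrime.comap _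
  -- p consists of zero divisors
  have hsub : (p : Set A) ⊆ ⋃ q ∈ associatedPrimes A A, (q : Set A) := by
    rw [biUnion_associatedPrimes_eq_zero_divisors]
    intro a hap
    rcases em (a ∈ A⁰) with ha0 | ha0
    · exact absurd (Ideal.eq_top_of_isUnit_mem _ (Ideal.mem_comap.mp hap)
        (IsLocalization.map_units K (⟨a, ha0⟩ : A⁰))) hP.ne_top
    · rw [mem_nonZeroDivisors_iff_right] at ha0
      push_neg at ha0
      obtain ⟨x, hxa, hx0⟩ := ha0
      exact ⟨x, hx0, by rw [smul_eq_mul, mul_comm]; exact hxa⟩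
  -- prime avoidance
  have hAss := my_ass_finite A
  have hsub' : (p : Set A) ⊆ ⋃ i ∈ (hAss.toFinset : Set (Ideal A)), (id i : Ideal A) := by
    intro x hxp
    obtain ⟨q, hq, hxq⟩ := Set.mem_iUnion₂.mp (hsub hxp)
    exact Set.mem_biUnion (show q ∈ hAss.toFinset from (hAss.mem_toFinset).mpr hq) hxq
  obtain ⟨q, hqs, hpq⟩ := (Ideal.subset_union_prime p p
    (fun i hi _ _ => ((hAss.mem_toFinset).mp hi).isPrime)).mp hsub'
  rw [Set.Finite.mem_toFinset] at hqs
  -- P ≤ map q, with map q prime, so P = map q and p = q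
  have hqP : (q.map (algebraMap A K)).IsPrime :=
    IsLocalization.isPrime_of_isPrime_disjoint A⁰ K q hqs.isPrime (my_disj A hqs)
  have hPle : P ≤ q.map (algebraMap A K) := by
    rw [← IsLocalization.map_comap A⁰ K P]
    exact Ideal.map_mono hpq
  have hPeq : P = q.map (algebraMap A K) := hP.eq_of_le hqP.ne_top hPle
  have hpeq : p = q := by
    rw [hp, hPeq]; exact IsLocalization.under_map_of_isPrime_disjoint A⁰ K hqs.isPrime (my_disj A hqs)
  constructor
  · rw [hpeq]; exact hqs
  · rw [hpeq, ← hPeq]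

end Glue

open nonZeroDivisors in
/-- Let `A` be a Noetherian commutative ring and `M` a finite `A`-module.
Then `M ⊗_A Q(A) ≅ Q(A)^r` (i.e. `M` has rank `r`) if and only if `M_p` is a free
`A_p`-module of rank `r` for every associated prime `p` of `A`. -/
theorem stmt_7 (A : Type*) [CommRing A] [IsNoetherianRing A]
    (M : Type*) [AddCommGroup M] [Module A M] [Module.Finite A M] (r : ℕ) :
    Nonempty ((FractionRing A ⊗[A] M) ≃ₗ[FractionRing A] (Fin r → FractionRing A)) ↔
      ∀ p : {q : Ideal A // q ∈ associatedPrimes A A},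
        Nonempty (Module.Basis (Fin r) (Localization (p.1.primeCompl (hp := p.2.isPrime)))
          (LocalizedModule (p.1.primeCompl (hp := p.2.isPrime)) M)) := by
  classical
  rcases subsingleton_or_nontrivial A with hA | hA
  · constructor
    · rintro - p
      exact absurd p.2 not_isAssociatedPrime_of_subsingleton
    · intro _
      haveI : Subsingleton (FractionRing A) := Module.subsingleton A _
      haveI : Subsingleton (FractionRing A ⊗[A] M) := Module.subsingleton (FractionRing A) _
      exact ⟨{ toFun := fun _ => 0, map_add' := by intros; simp, map_smul' := by intros; simp,
               invFun := fun _ => 0, left_inv := fun x => Subsingleton.elim _ _,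
               right_inv := fun x => Subsingleton.elim _ _ }⟩
  · set K := FractionRing A with hK
    let beq : (K ⊗[A] M) ≃ₗ[K] LocalizedModule A⁰ M :=
      (IsLocalizedModule.isBaseChange A⁰ K (LocalizedModule.mkLinearMap A⁰ M)).equiv
    constructor
    · rintro ⟨E⟩ p
      haveI := p.2.isPrime
      have hp' : A⁰ ≤ p.1.primeCompl := fun a ha hap =>
        Set.disjoint_left.mp (my_disj A p.2) ha hap
      have hfree : Module.Free K (LocalizedModule A⁰ M) :=
        Module.Free.of_equiv (beq.symm.trans E).symm
      have hrank : Module.finrank K (LocalizedModule A⁰ M) = r := by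
        rw [LinearEquiv.finrank_eq (beq.symm.trans E), Module.finrank_pi, Fintype.card_fin]
      exact my_fwd r A⁰ p.1 hp' hfree hrank
    · intro h
      haveI : IsNoetherianRing K := IsLocalization.isNoetherianRing A⁰ K inferInstance
      haveI : Module.Finite K (LocalizedModule A⁰ M) :=
        Module.Finite.of_isLocalizedModule A⁰ (LocalizedModule.mkLinearMap A⁰ M)
      have hfin : {P : Ideal K | P.IsMaximal}.Finite := by
        have himg : (fun P : Ideal K => P.comap (algebraMap A K)) '' {P | P.IsMaximal}
            ⊆ associatedPrimes A A := by
          rintro _ ⟨P, hP, rfl⟩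
          exact (my_comap_mem A P hP).1
        have hinj : Set.InjOn (fun P : Ideal K => P.comap (algebraMap A K))
            {P | P.IsMaximal} := by
          intro P1 h1 P2 h2 hc
          have e1 := (my_comap_mem A P1 h1).2
          have e2 := (my_comap_mem A P2 h2).2
          rw [e1, e2]
          simp only at hc
          rw [hc]
        exact Set.Finite.of_finite_image ((my_ass_finite A).subset himg) hinj
      obtain ⟨E2⟩ := my_end r hfin (fun P hP => by
        haveI := hP.isPrime
        exact my_bwd r A⁰ P (h ⟨P.comap (algebraMap A K), (my_comap_mem A P hP).1⟩))
      exact ⟨beq.trans E2⟩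
end
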